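/- The Gram matrix of the Frobenius form on the 5-dimensional algebra 4B_α (with (a_i, a_i) = 1, (a_i, a_{i+1}) = α²/4, and the remaining values determined by associativity of the form) has determinant (α⁴/2⁸)(α−2)⁴(α+1)², which is nonnegative for all real α and vanishes exactly at α ∈ {−1, 0, 2}. -/

import Mathlib

noncomputable section

/-- Index type for the basis `a₋₁, a₀, a₁, a₂` (as `some i`, `i : ZMod 4`) and `s`
(as `none`) of the algebra `4B_α`. -/
abbrev I4 : Type := Option (ZMod 4)

/-- Basis vectors. -/
def e4 (F : Type*) [Field F] (k : I4) : I4 → F := Pi.single k 1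

open scoped Classical in
/-- Structure constants of `4B_α`:  here `β = α²/2`, `s = a₀∘a₁`, indices mod 4,
`a_i a_{i+2} = -(α/2)(a_{i+1}+a_{i+3}) - (2/α)s` (so that `⟨a_i, a_{i+2}⟩ ≅ 3C_α`). -/
def T4B (F : Type*) [Field F] (α : F) : I4 → I4 → (I4 → F) :=
  fun i j =>
    match i, j with
    | some i, some j =>
        if i = j then e4 F (some i)
        else if j - i = 1 ∨ j - i = 3 then
          (α ^ 2 / 2) • (e4 F (some i) + e4 F (some j)) + e4 F none
        else
          (-(α / 2)) • (e4 F (some (i + 1)) + e4 F (some (i + 3))) - (2 / α) • e4 F none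
    | some i, none =>
        (-(α ^ 2 * (1 - α + α ^ 2) / 4)) • e4 F (some i)
          + ((2 - α) * α ^ 3 / 8) • (e4 F (some (i - 1)) + e4 F (some (i + 1)))
          + ((2 - α) * α / 2) • e4 F none
    | none, some j =>
        (-(α ^ 2 * (1 - α + α ^ 2) / 4)) • e4 F (some j)
          + ((2 - α) * α ^ 3 / 8) • (e4 F (some (j - 1)) + e4 F (some (j + 1)))
          + ((2 - α) * α / 2) • e4 F none
    | none, none =>
        ((α - 2) * (2 * α - 1) * α ^ 4 / 16) • (∑ k : ZMod 4, e4 F (some k))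
          + (α ^ 2 * (1 - 6 * α + 2 * α ^ 2) / 4) • e4 F none

/-- The bilinear multiplication of `4B_α`. -/
def mul4B (F : Type*) [Field F] (α : F) :
    (I4 → F) →ₗ[F] (I4 → F) →ₗ[F] (I4 → F) :=
  LinearMap.mk₂ F (fun x y => ∑ i : I4, ∑ j : I4, (x i * y j) • T4B F α i j)
    (fun x x' y => by simp [add_mul, add_smul, Finset.sum_add_distrib])
    (fun c x y => by simp [Finset.smul_sum, smul_smul, mul_assoc])
    (fun x y y' => by simp [mul_add, add_smul, Finset.sum_add_distrib])
    (fun c x y => by simp [Finset.smul_sum, smul_smul, mul_left_comm])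


lemma mul4B_basis (α : ℝ) (i j : I4) : mul4B ℝ α (e4 ℝ i) (e4 ℝ j) = T4B ℝ α i j := by
  cases i <;> cases j <;>
  simp [mul4B, e4, Pi.single_apply, ite_mul, mul_ite, Finset.sum_ite_eq']

def eq5 : Fin 5 ≃ I4 where
  toFun := ![some 0, some 1, some 2, some 3, none]
  invFun := fun x => x.elim 4 (fun i => ⟨i.val, Nat.lt_succ_of_lt i.isLt⟩)
  left_inv := by decide
  right_inv := by decide

set_option maxHeartbeats 4000000 in
theorem det_fin_five (M : Matrix (Fin 5) (Fin 5) ℝ) : M.det =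
    M 0 0*M 1 1*M 2 2*M 3 3*M 4 4 - M 0 0*M 1 1*M 2 2*M 3 4*M 4 3 - M 0 0*M 1 1*M 2 3*M 3 2*M 4 4 + M 0 0*M 1 1*M 2 3*M 3 4*M 4 2 + M 0 0*M 1 1*M 2 4*M 3 2*M 4 3 - M 0 0*M 1 1*M 2 4*M 3 3*M 4 2 - M 0 0*M 1 2*M 2 1*M 3 3*M 4 4 + M 0 0*M 1 2*M 2 1*M 3 4*M 4 3 + M 0 0*M 1 2*M 2 3*M 3 1*M 4 4 - M 0 0*M 1 2*M 2 3*M 3 4*M 4 1 - M 0 0*M 1 2*M 2 4*M 3 1*M 4 3 + M 0 0*M 1 2*M 2 4*M 3 3*M 4 1 + M 0 0*M 1 3*M 2 1*M 3 2*M 4 4 - M 0 0*M 1 3*M 2 1*M 3 4*M 4 2 - M 0 0*M 1 3*M 2 2*M 3 1*M 4 4 + M 0 0*M 1 3*M 2 2*M 3 4*M 4 1 + M 0 0*M 1 3*M 2 4*M 3 1*M 4 2 - M 0 0*M 1 3*M 2 4*M 3 2*M 4 1 - M 0 0*M 1 4*M 2 1*M 3 2*M 4 3 + M 0 0*M 1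 4*M 2 1*M 3 3*M 4 2 + M 0 0*M 1 4*M 2 2*M 3 1*M 4 3 - M 0 0*M 1 4*M 2 2*M 3 3*M 4 1 - M 0 0*M 1 4*M 2 3*M 3 1*M 4 2 + M 0 0*M 1 4*M 2 3*M 3 2*M 4 1 - M 0 1*M 1 0*M 2 2*M 3 3*M 4 4 + M 0 1*M 1 0*M 2 2*M 3 4*M 4 3 + M 0 1*M 1 0*M 2 3*M 3 2*M 4 4 - M 0 1*M 1 0*M 2 3*M 3 4*M 4 2 - M 0 1*M 1 0*M 2 4*M 3 2*M 4 3 + M 0 1*M 1 0*M 2 4*M 3 3*M 4 2 + M 0 1*M 1 2*M 2 0*M 3 3*M 4 4 - M 0 1*M 1 2*M 2 0*M 3 4*M 4 3 - M 0 1*M 1 2*M 2 3*M 3 0*M 4 4 + M 0 1*M 1 2*M 2 3*M 3 4*M 4 0 + M 0 1*M 1 2*M 2 4*M 3 0*M 4 3 - M 0 1*M 1 2*M 2 4*M 3 3*M 4 0 - M 0 1*M 1 3*M 2 0*M 3 2*M 4 4 + M 0 1*M 1 3*M 2 0*M 3 4*M 4 2 + M 0 1*M 1 3*M 2 2*M 3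 0*M 4 4 - M 0 1*M 1 3*M 2 2*M 3 4*M 4 0 - M 0 1*M 1 3*M 2 4*M 3 0*M 4 2 + M 0 1*M 1 3*M 2 4*M 3 2*M 4 0 + M 0 1*M 1 4*M 2 0*M 3 2*M 4 3 - M 0 1*M 1 4*M 2 0*M 3 3*M 4 2 - M 0 1*M 1 4*M 2 2*M 3 0*M 4 3 + M 0 1*M 1 4*M 2 2*M 3 3*M 4 0 + M 0 1*M 1 4*M 2 3*M 3 0*M 4 2 - M 0 1*M 1 4*M 2 3*M 3 2*M 4 0 + M 0 2*M 1 0*M 2 1*M 3 3*M 4 4 - M 0 2*M 1 0*M 2 1*M 3 4*M 4 3 - M 0 2*M 1 0*M 2 3*M 3 1*M 4 4 + M 0 2*M 1 0*M 2 3*M 3 4*M 4 1 + M 0 2*M 1 0*M 2 4*M 3 1*M 4 3 - M 0 2*M 1 0*M 2 4*M 3 3*M 4 1 - M 0 2*M 1 1*M 2 0*M 3 3*M 4 4 + M 0 2*M 1 1*M 2 0*M 3 4*M 4 3 + M 0 2*M 1 1*M 2 3*M 3 0*M 4 4 - M 0 2*M 1 1*M 2 3*M 3 4*M 4 0 - M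 0 2*M 1 1*M 2 4*M 3 0*M 4 3 + M 0 2*M 1 1*M 2 4*M 3 3*M 4 0 + M 0 2*M 1 3*M 2 0*M 3 1*M 4 4 - M 0 2*M 1 3*M 2 0*M 3 4*M 4 1 - M 0 2*M 1 3*M 2 1*M 3 0*M 4 4 + M 0 2*M 1 3*M 2 1*M 3 4*M 4 0 + M 0 2*M 1 3*M 2 4*M 3 0*M 4 1 - M 0 2*M 1 3*M 2 4*M 3 1*M 4 0 - M 0 2*M 1 4*M 2 0*M 3 1*M 4 3 + M 0 2*M 1 4*M 2 0*M 3 3*M 4 1 + M 0 2*M 1 4*M 2 1*M 3 0*M 4 3 - M 0 2*M 1 4*M 2 1*M 3 3*M 4 0 - M 0 2*M 1 4*M 2 3*M 3 0*M 4 1 + M 0 2*M 1 4*M 2 3*M 3 1*M 4 0 - M 0 3*M 1 0*M 2 1*M 3 2*M 4 4 + M 0 3*M 1 0*M 2 1*M 3 4*M 4 2 + M 0 3*M 1 0*M 2 2*M 3 1*M 4 4 - M 0 3*M 1 0*M 2 2*M 3 4*M 4 1 - M 0 3*M 1 0*M 2 4*M 3 1*M 4 2 + M 0 3*M 1 0*M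 2 4*M 3 2*M 4 1 + M 0 3*M 1 1*M 2 0*M 3 2*M 4 4 - M 0 3*M 1 1*M 2 0*M 3 4*M 4 2 - M 0 3*M 1 1*M 2 2*M 3 0*M 4 4 + M 0 3*M 1 1*M 2 2*M 3 4*M 4 0 + M 0 3*M 1 1*M 2 4*M 3 0*M 4 2 - M 0 3*M 1 1*M 2 4*M 3 2*M 4 0 - M 0 3*M 1 2*M 2 0*M 3 1*M 4 4 + M 0 3*M 1 2*M 2 0*M 3 4*M 4 1 + M 0 3*M 1 2*M 2 1*M 3 0*M 4 4 - M 0 3*M 1 2*M 2 1*M 3 4*M 4 0 - M 0 3*M 1 2*M 2 4*M 3 0*M 4 1 + M 0 3*M 1 2*M 2 4*M 3 1*M 4 0 + M 0 3*M 1 4*M 2 0*M 3 1*M 4 2 - M 0 3*M 1 4*M 2 0*M 3 2*M 4 1 - M 0 3*M 1 4*M 2 1*M 3 0*M 4 2 + M 0 3*M 1 4*M 2 1*M 3 2*M 4 0 + M 0 3*M 1 4*M 2 2*M 3 0*M 4 1 - M 0 3*M 1 4*M 2 2*M 3 1*M 4 0 + M 0 4*M 1 0*M 2 1*M 3 2*M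 4 3 - M 0 4*M 1 0*M 2 1*M 3 3*M 4 2 - M 0 4*M 1 0*M 2 2*M 3 1*M 4 3 + M 0 4*M 1 0*M 2 2*M 3 3*M 4 1 + M 0 4*M 1 0*M 2 3*M 3 1*M 4 2 - M 0 4*M 1 0*M 2 3*M 3 2*M 4 1 - M 0 4*M 1 1*M 2 0*M 3 2*M 4 3 + M 0 4*M 1 1*M 2 0*M 3 3*M 4 2 + M 0 4*M 1 1*M 2 2*M 3 0*M 4 3 - M 0 4*M 1 1*M 2 2*M 3 3*M 4 0 - M 0 4*M 1 1*M 2 3*M 3 0*M 4 2 + M 0 4*M 1 1*M 2 3*M 3 2*M 4 0 + M 0 4*M 1 2*M 2 0*M 3 1*M 4 3 - M 0 4*M 1 2*M 2 0*M 3 3*M 4 1 - M 0 4*M 1 2*M 2 1*M 3 0*M 4 3 + M 0 4*M 1 2*M 2 1*M 3 3*M 4 0 + M 0 4*M 1 2*M 2 3*M 3 0*M 4 1 - M 0 4*M 1 2*M 2 3*M 3 1*M 4 0 - M 0 4*M 1 3*M 2 0*M 3 1*M 4 2 + M 0 4*M 1 3*M 2 0*M 3 2*M 4 1 + M 0 4*M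 1 3*M 2 1*M 3 0*M 4 2 - M 0 4*M 1 3*M 2 1*M 3 2*M 4 0 - M 0 4*M 1 3*M 2 2*M 3 0*M 4 1 + M 0 4*M 1 3*M 2 2*M 3 1*M 4 0 := by
  rw [Matrix.det_succ_row_zero]
  simp only [Fin.sum_univ_succ, Fin.sum_univ_zero, Matrix.det_succ_row_zero, Matrix.det_fin_three, Matrix.submatrix_apply, Fin.succAbove_zero, Fin.succ_succAbove_zero, Fin.succ_succAbove_succ, Fin.zero_succAbove, Fin.succ_zero_eq_one, Fin.succ_one_eq_two]
  simp [Fin.succAbove, Fin.lt_def, Fin.succ, Fin.castSucc]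
  ring

set_option maxHeartbeats 4000000 in
/-- The Gram matrix of the Frobenius form on `4B_α` (with `(a_i,a_i) = 1`,
`(a_i,a_{i+1}) = α²/4`, the rest determined by associativity of the form) has
determinant `(α⁴/2⁸)(α-2)⁴(α+1)²`; this quantity is nonnegative for every real `α` and
vanishes exactly at `α ∈ {-1, 0, 2}`. -/
theorem fourB_gram (α : ℝ)
    (hα0 : α ≠ 0) (hα1 : α ≠ 1) (hα2 : α ≠ 2)
    (hp1 : 2 * α ^ 5 - 4 * α ^ 4 - 6 * α ^ 3 + 13 * α ^ 2 - 7 * α + 1 ≠ 0)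
    (hp2 : 66 * α ^ 6 - 124 * α ^ 5 + 26 * α ^ 4 + 71 * α ^ 3 - 57 * α ^ 2
      + 17 * α - 2 ≠ 0)
    (hp3 : 16 * α ^ 7 - 24 * α ^ 6 - 22 * α ^ 5 + 78 * α ^ 4 - 91 * α ^ 3
      + 57 * α ^ 2 - 18 * α + 2 ≠ 0)
    (B : (I4 → ℝ) →ₗ[ℝ] (I4 → ℝ) →ₗ[ℝ] ℝ)
    (hsymm : ∀ x y : I4 → ℝ, B x y = B y x)
    (hfrob : ∀ x y z : I4 → ℝ, B (mul4B ℝ α x y) z = B x (mul4B ℝ α y z))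
    (hdiag : ∀ i : ZMod 4, B (e4 ℝ (some i)) (e4 ℝ (some i)) = 1)
    (hoff : ∀ i : ZMod 4, B (e4 ℝ (some i)) (e4 ℝ (some (i + 1))) = α ^ 2 / 4) :
    (Matrix.of fun i j : I4 => B (e4 ℝ i) (e4 ℝ j)).det =
      α ^ 4 / 2 ^ 8 * (α - 2) ^ 4 * (α + 1) ^ 2 ∧
    (∀ γ : ℝ, 0 ≤ γ ^ 4 / 2 ^ 8 * (γ - 2) ^ 4 * (γ + 1) ^ 2 ∧
      (γ ^ 4 / 2 ^ 8 * (γ - 2) ^ 4 * (γ + 1) ^ 2 = 0 ↔ γ = -1 ∨ γ = 0 ∨ γ = 2)) := by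
  have ho0 : B (e4 ℝ (some 0)) (e4 ℝ (some 1)) = α ^ 2 / 4 := hoff 0
  have ho1 : B (e4 ℝ (some 1)) (e4 ℝ (some 2)) = α ^ 2 / 4 := hoff 1
  have ho2 : B (e4 ℝ (some 2)) (e4 ℝ (some 3)) = α ^ 2 / 4 := hoff 2
  have ho3 : B (e4 ℝ (some 3)) (e4 ℝ (some 0)) = α ^ 2 / 4 := hoff 3
  have hd0 : B (e4 ℝ (some 0)) (e4 ℝ none) = -(α^2/4) - α^4/8 := by
    have h := hfrob (e4 ℝ (some 0)) (e4 ℝ (some 0)) (e4 ℝ (some 1))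
    rw [mul4B_basis, mul4B_basis] at h
    simp (config := { decide := true }) [T4B, map_add, map_sub, map_smul, LinearMap.add_apply,
      LinearMap.sub_apply, LinearMap.smul_apply, smul_eq_mul,
      show ((0:ZMod 4)+1) = 1 from rfl,
      show ((0:ZMod 4)+2) = 2 from rfl,
      show ((0:ZMod 4)+3) = 3 from rfl,
      show ((0:ZMod 4)-1) = 3 from rfl,
      show ((1:ZMod 4)+1) = 2 from rfl,
      show ((1:ZMod 4)+2) = 3 from rfl,
      show ((1:ZMod 4)+3) = 0 from rfl,
      show ((1:ZMod 4)-1) = 0 from rfl,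
      show ((2:ZMod 4)+1) = 3 from rfl,
      show ((2:ZMod 4)+2) = 0 from rfl,
      show ((2:ZMod 4)+3) = 1 from rfl,
      show ((2:ZMod 4)-1) = 1 from rfl,
      show ((3:ZMod 4)+1) = 0 from rfl,
      show ((3:ZMod 4)+2) = 1 from rfl,
      show ((3:ZMod 4)+3) = 2 from rfl,
      show ((3:ZMod 4)-1) = 2 from rfl] at h
    rw [hdiag 0, ho0] at h
    linarith
  have hd1 : B (e4 ℝ (some 1)) (e4 ℝ none) = -(α^2/4) - α^4/8 := by
    have h := hfrob (e4 ℝ (some 1)) (e4 ℝ (some 1)) (e4 ℝ (some 2))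
    rw [mul4B_basis, mul4B_basis] at h
    simp (config := { decide := true }) [T4B, map_add, map_sub, map_smul, LinearMap.add_apply,
      LinearMap.sub_apply, LinearMap.smul_apply, smul_eq_mul,
      show ((0:ZMod 4)+1) = 1 from rfl,
      show ((0:ZMod 4)+2) = 2 from rfl,
      show ((0:ZMod 4)+3) = 3 from rfl,
      show ((0:ZMod 4)-1) = 3 from rfl,
      show ((1:ZMod 4)+1) = 2 from rfl,
      show ((1:ZMod 4)+2) = 3 from rfl,
      show ((1:ZMod 4)+3) = 0 from rfl,
      show ((1:ZMod 4)-1) = 0 from rfl,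
      show ((2:ZMod 4)+1) = 3 from rfl,
      show ((2:ZMod 4)+2) = 0 from rfl,
      show ((2:ZMod 4)+3) = 1 from rfl,
      show ((2:ZMod 4)-1) = 1 from rfl,
      show ((3:ZMod 4)+1) = 0 from rfl,
      show ((3:ZMod 4)+2) = 1 from rfl,
      show ((3:ZMod 4)+3) = 2 from rfl,
      show ((3:ZMod 4)-1) = 2 from rfl] at h
    rw [hdiag 1, ho1] at h
    linarith
  have hd2 : B (e4 ℝ (some 2)) (e4 ℝ none) = -(α^2/4) - α^4/8 := by
    have h := hfrob (e4 ℝ (some 2)) (e4 ℝ (some 2)) (e4 ℝ (some 3))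
    rw [mul4B_basis, mul4B_basis] at h
    simp (config := { decide := true }) [T4B, map_add, map_sub, map_smul, LinearMap.add_apply,
      LinearMap.sub_apply, LinearMap.smul_apply, smul_eq_mul,
      show ((0:ZMod 4)+1) = 1 from rfl,
      show ((0:ZMod 4)+2) = 2 from rfl,
      show ((0:ZMod 4)+3) = 3 from rfl,
      show ((0:ZMod 4)-1) = 3 from rfl,
      show ((1:ZMod 4)+1) = 2 from rfl,
      show ((1:ZMod 4)+2) = 3 from rfl,
      show ((1:ZMod 4)+3) = 0 from rfl,
      show ((1:ZMod 4)-1) = 0 from rfl,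
      show ((2:ZMod 4)+1) = 3 from rfl,
      show ((2:ZMod 4)+2) = 0 from rfl,
      show ((2:ZMod 4)+3) = 1 from rfl,
      show ((2:ZMod 4)-1) = 1 from rfl,
      show ((3:ZMod 4)+1) = 0 from rfl,
      show ((3:ZMod 4)+2) = 1 from rfl,
      show ((3:ZMod 4)+3) = 2 from rfl,
      show ((3:ZMod 4)-1) = 2 from rfl] at h
    rw [hdiag 2, ho2] at h
    linarith
  have hd3 : B (e4 ℝ (some 3)) (e4 ℝ none) = -(α^2/4) - α^4/8 := by
    have h := hfrob (e4 ℝ (some 3)) (e4 ℝ (some 3)) (e4 ℝ (some 0))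
    rw [mul4B_basis, mul4B_basis] at h
    simp (config := { decide := true }) [T4B, map_add, map_sub, map_smul, LinearMap.add_apply,
      LinearMap.sub_apply, LinearMap.smul_apply, smul_eq_mul,
      show ((0:ZMod 4)+1) = 1 from rfl,
      show ((0:ZMod 4)+2) = 2 from rfl,
      show ((0:ZMod 4)+3) = 3 from rfl,
      show ((0:ZMod 4)-1) = 3 from rfl,
      show ((1:ZMod 4)+1) = 2 from rfl,
      show ((1:ZMod 4)+2) = 3 from rfl,
      show ((1:ZMod 4)+3) = 0 from rfl,
      show ((1:ZMod 4)-1) = 0 from rfl,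
      show ((2:ZMod 4)+1) = 3 from rfl,
      show ((2:ZMod 4)+2) = 0 from rfl,
      show ((2:ZMod 4)+3) = 1 from rfl,
      show ((2:ZMod 4)-1) = 1 from rfl,
      show ((3:ZMod 4)+1) = 0 from rfl,
      show ((3:ZMod 4)+2) = 1 from rfl,
      show ((3:ZMod 4)+3) = 2 from rfl,
      show ((3:ZMod 4)-1) = 2 from rfl] at h
    rw [hdiag 3, ho3] at h
    linarith
  have hc0 : B (e4 ℝ (some 0)) (e4 ℝ (some 2)) = α / 2 := by
    have h := hfrob (e4 ℝ (some 0)) (e4 ℝ (some 0)) (e4 ℝ (some 2))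
    rw [mul4B_basis, mul4B_basis] at h
    simp (config := { decide := true }) [T4B, map_add, map_sub, map_smul, LinearMap.add_apply,
      LinearMap.sub_apply, LinearMap.smul_apply, smul_eq_mul,
      show ((0:ZMod 4)+1) = 1 from rfl,
      show ((0:ZMod 4)+2) = 2 from rfl,
      show ((0:ZMod 4)+3) = 3 from rfl,
      show ((0:ZMod 4)-1) = 3 from rfl,
      show ((1:ZMod 4)+1) = 2 from rfl,
      show ((1:ZMod 4)+2) = 3 from rfl,
      show ((1:ZMod 4)+3) = 0 from rfl,
      show ((1:ZMod 4)-1) = 0 from rfl,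
      show ((2:ZMod 4)+1) = 3 from rfl,
      show ((2:ZMod 4)+2) = 0 from rfl,
      show ((2:ZMod 4)+3) = 1 from rfl,
      show ((2:ZMod 4)-1) = 1 from rfl,
      show ((3:ZMod 4)+1) = 0 from rfl,
      show ((3:ZMod 4)+2) = 1 from rfl,
      show ((3:ZMod 4)+3) = 2 from rfl,
      show ((3:ZMod 4)-1) = 2 from rfl] at h
    rw [ho0, hsymm (e4 ℝ (some 0)) (e4 ℝ (some 3)), ho3, hd0] at h
    rw [h]; field_simp; ring
  have hc1 : B (e4 ℝ (some 1)) (e4 ℝ (some 3)) = α / 2 := by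
    have h := hfrob (e4 ℝ (some 1)) (e4 ℝ (some 1)) (e4 ℝ (some 3))
    rw [mul4B_basis, mul4B_basis] at h
    simp (config := { decide := true }) [T4B, map_add, map_sub, map_smul, LinearMap.add_apply,
      LinearMap.sub_apply, LinearMap.smul_apply, smul_eq_mul,
      show ((0:ZMod 4)+1) = 1 from rfl,
      show ((0:ZMod 4)+2) = 2 from rfl,
      show ((0:ZMod 4)+3) = 3 from rfl,
      show ((0:ZMod 4)-1) = 3 from rfl,
      show ((1:ZMod 4)+1) = 2 from rfl,
      show ((1:ZMod 4)+2) = 3 from rfl,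
      show ((1:ZMod 4)+3) = 0 from rfl,
      show ((1:ZMod 4)-1) = 0 from rfl,
      show ((2:ZMod 4)+1) = 3 from rfl,
      show ((2:ZMod 4)+2) = 0 from rfl,
      show ((2:ZMod 4)+3) = 1 from rfl,
      show ((2:ZMod 4)-1) = 1 from rfl,
      show ((3:ZMod 4)+1) = 0 from rfl,
      show ((3:ZMod 4)+2) = 1 from rfl,
      show ((3:ZMod 4)+3) = 2 from rfl,
      show ((3:ZMod 4)-1) = 2 from rfl] at h
    rw [ho1, hsymm (e4 ℝ (some 1)) (e4 ℝ (some 0)), ho0, hd1] at h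
    rw [h]; field_simp; ring
  have ht : B (e4 ℝ none) (e4 ℝ none) = 5*α^4/16 - α^5/8 + α^6/8 := by
    have h := hfrob (e4 ℝ (some 0)) (e4 ℝ (some 1)) (e4 ℝ none)
    rw [mul4B_basis, mul4B_basis] at h
    simp (config := { decide := true }) [T4B, map_add, map_sub, map_smul, LinearMap.add_apply,
      LinearMap.sub_apply, LinearMap.smul_apply, smul_eq_mul,
      show ((0:ZMod 4)+1) = 1 from rfl,
      show ((0:ZMod 4)+2) = 2 from rfl,
      show ((0:ZMod 4)+3) = 3 from rfl,
      show ((0:ZMod 4)-1) = 3 from rfl,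
      show ((1:ZMod 4)+1) = 2 from rfl,
      show ((1:ZMod 4)+2) = 3 from rfl,
      show ((1:ZMod 4)+3) = 0 from rfl,
      show ((1:ZMod 4)-1) = 0 from rfl,
      show ((2:ZMod 4)+1) = 3 from rfl,
      show ((2:ZMod 4)+2) = 0 from rfl,
      show ((2:ZMod 4)+3) = 1 from rfl,
      show ((2:ZMod 4)-1) = 1 from rfl,
      show ((3:ZMod 4)+1) = 0 from rfl,
      show ((3:ZMod 4)+2) = 1 from rfl,
      show ((3:ZMod 4)+3) = 2 from rfl,
      show ((3:ZMod 4)-1) = 2 from rfl] at h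
    rw [hd0, hd1, ho0, hdiag 0, hc0] at h
    linear_combination h
  have hM : (Matrix.of fun i j : I4 => B (e4 ℝ i) (e4 ℝ j)).submatrix eq5 eq5 =
      !![1, α^2/4, α/2, α^2/4, -(α^2/4) - α^4/8;
         α^2/4, 1, α^2/4, α/2, -(α^2/4) - α^4/8;
         α/2, α^2/4, 1, α^2/4, -(α^2/4) - α^4/8;
         α^2/4, α/2, α^2/4, 1, -(α^2/4) - α^4/8;
         -(α^2/4) - α^4/8, -(α^2/4) - α^4/8, -(α^2/4) - α^4/8, -(α^2/4) - α^4/8,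
           5*α^4/16 - α^5/8 + α^6/8] := by
    ext i j
    fin_cases i <;> fin_cases j <;>
      simp only [Matrix.submatrix_apply, Matrix.of_apply, eq5, Equiv.coe_fn_mk,
        Matrix.cons_val_zero, Matrix.cons_val_one, Matrix.head_cons, Matrix.cons_val_two,
        Matrix.tail_cons, Matrix.cons_val_three, Matrix.cons_val_four, Matrix.head_fin_const,
        Matrix.cons_val', Matrix.cons_val_fin_one, Matrix.empty_val',
        Fin.isValue, Matrix.cons_val_succ] <;>
      first
        | exact hdiag _
        | exact ho0 | exact ho1 | exact ho2 | exact ho3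
        | exact hc0 | exact hc1
        | exact hd0 | exact hd1 | exact hd2 | exact hd3 | exact ht
        | (rw [hsymm];
           first
             | exact ho0 | exact ho1 | exact ho2 | exact ho3
             | exact hc0 | exact hc1
             | exact hd0 | exact hd1 | exact hd2 | exact hd3)
  constructor
  · rw [← Matrix.det_submatrix_equiv_self eq5, hM, det_fin_five]
    norm_num [Matrix.cons_val_zero, Matrix.cons_val_one, Matrix.head_cons,
      Matrix.cons_val_two, Matrix.cons_val_three, Matrix.cons_val_four]
    ring
  · intro γ
    refine ⟨by positivity, ?_, ?_⟩
    · intro h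
      by_contra hne
      push_neg at hne
      obtain ⟨h1, h2, h3⟩ := hne
      exact mul_ne_zero (mul_ne_zero (div_ne_zero (pow_ne_zero _ h2) (by norm_num))
        (pow_ne_zero _ (sub_ne_zero.mpr h3)))
        (pow_ne_zero _ (by intro hc; exact h1 (by linarith))) h
    · rintro (rfl | rfl | rfl) <;> norm_num
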